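/- Under rotation moves on the chessboard-coloured grid, the multiset of colours of cells occupied by the nodes is invariant: a node at a black cell can only ever move to black cells, and similarly for red. Hence if shape A transforms to shape B by rotations, then A and B are colour-consistent (b(A) = b(B) and r(A) = r(B)). -/
import Mathlib


def Adjacent (p q : ℤ × ℤ) : Prop :=
  (p.1 = q.1 ∧ (p.2 = q.2 + 1 ∨ q.2 = p.2 + 1)) ∨
  (p.2 = q.2 ∧ (p.1 = q.1 + 1 ∨ q.1 = p.1 + 1))

def ShapeConnected (S : Finset (ℤ × ℤ)) : Prop :=
  ∀ p ∈ S, ∀ q ∈ S,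
    Relation.ReflTransGen (fun a b => a ∈ S ∧ b ∈ S ∧ Adjacent a b) p q

/-- A single rotation move: node `p` rotates 90° around its neighbour `v` to the
diagonally adjacent empty cell `q`, the swept intermediate cell being empty. -/
def RotMove (S T : Finset (ℤ × ℤ)) : Prop :=
  ∃ p v q : ℤ × ℤ, p ∈ S ∧ v ∈ S ∧ v ≠ p ∧ Adjacent p v ∧ Adjacent q v ∧ q ∉ S ∧
    |q.1 - p.1| = 1 ∧ |q.2 - p.2| = 1 ∧
    (∀ w : ℤ × ℤ, Adjacent w p → Adjacent w q → w ≠ v → w ∉ S) ∧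
    T = insert q (S.erase p)

def bcount (S : Finset (ℤ × ℤ)) : ℕ := (S.filter (fun p => (p.1 + p.2) % 2 = 0)).card
def rcount (S : Finset (ℤ × ℤ)) : ℕ := (S.filter (fun p => (p.1 + p.2) % 2 ≠ 0)).card

/-- Rotation moves preserve chessboard colours: each single move keeps the counts of
black-cell and red-cell nodes, hence any shape reachable by rotations is
colour-consistent with the original. -/
theorem stmt17 :
    (∀ S T : Finset (ℤ × ℤ), RotMove S T →
      bcount S = bcount T ∧ rcount S = rcount T) ∧
    (∀ A B : Finset (ℤ × ℤ), Relation.ReflTransGen RotMove A B →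
      bcount A = bcount B ∧ rcount A = rcount B) := by
  have card_move : ∀ (P : ℤ × ℤ → Prop) [DecidablePred P] (S : Finset (ℤ × ℤ))
      (p q : ℤ × ℤ), p ∈ S → q ∉ S → (P p ↔ P q) →
      (S.filter P).card = ((insert q (S.erase p)).filter P).card := by
    intro P _ S p q hp hq hPQ
    have hqe : q ∉ S.erase p := fun h => hq (Finset.mem_erase.mp h).2
    by_cases hP : P q
    · have hPp : P p := hPQ.mpr hP
      rw [Finset.filter_insert, if_pos hP, Finset.filter_erase]
      rw [Finset.card_insert_of_notMem (fun h => hqe (Finset.mem_erase.mpr ⟨(Finset.mem_erase.mp h).1, (Finset.mem_filter.mp (Finset.mem_of_mem_erase h)).1⟩)),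
        Finset.card_erase_of_mem (Finset.mem_filter.mpr ⟨hp, hPp⟩)]
      have : 0 < (S.filter P).card :=
        Finset.card_pos.mpr ⟨p, Finset.mem_filter.mpr ⟨hp, hPp⟩⟩
      omega
    · have hPp : ¬ P p := fun h => hP (hPQ.mp h)
      rw [Finset.filter_insert, if_neg hP, Finset.filter_erase,
        Finset.erase_eq_of_notMem (fun h => hPp (Finset.mem_filter.mp h).2)]
  have single : ∀ S T : Finset (ℤ × ℤ), RotMove S T →
      bcount S = bcount T ∧ rcount S = rcount T := by
    intro S T h
    obtain ⟨p, v, q, hp, -, -, -, -, hq, h1, h2, -, hT⟩ := h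
    have hd1 : q.1 - p.1 = 1 ∨ q.1 - p.1 = -1 := abs_eq (by norm_num) |>.mp h1
    have hd2 : q.2 - p.2 = 1 ∨ q.2 - p.2 = -1 := abs_eq (by norm_num) |>.mp h2
    have hpar : (p.1 + p.2) % 2 = (q.1 + q.2) % 2 := by omega
    subst hT
    constructor
    · exact card_move _ S p q hp hq (by omega)
    · exact card_move _ S p q hp hq (by omega)
  refine ⟨single, fun A B h => ?_⟩
  induction h with
  | refl => exact ⟨rfl, rfl⟩
  | tail _ hst ih =>
    have := single _ _ hst
    exact ⟨ih.1.trans this.1, ih.2.trans this.2⟩
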